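/- Let (x*, y*, w*, z*, s*) be an extreme point of P = conv(Q) and let t ∈ {1, …, T} be a time period with Σ_{v∈𝒱} y*_{v,t} = s*_{t−1} (where s*_0 = s₀). Then at most one vendor v ∈ 𝒱 has a sales quantity y*_{v,t} not belonging to {0, L^y_{v,t}, U^y_{v,t}}. -/

import Mathlib

open scoped BigOperators

/-- A point of the warehouse problem: purchases `x`, sales `y`,
purchase indicators `w`, sale indicators `z` (all indexed by vendor and time),
and stock levels `s` (indexed by time). -/
abbrev WPoint (V T : ℕ) :=
  (Fin V → Fin T → ℝ) × (Fin V → Fin T → ℝ) × (Fin V → Fin T → ℝ) ×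
    (Fin V → Fin T → ℝ) × (Fin T → ℝ)

namespace WPoint

variable {V T : ℕ}

def x (p : WPoint V T) : Fin V → Fin T → ℝ := p.1
def y (p : WPoint V T) : Fin V → Fin T → ℝ := p.2.1
def w (p : WPoint V T) : Fin V → Fin T → ℝ := p.2.2.1
def z (p : WPoint V T) : Fin V → Fin T → ℝ := p.2.2.2.1
def s (p : WPoint V T) : Fin T → ℝ := p.2.2.2.2

end WPoint

/-- A selector of one of the `x`/`y` decision variables. -/
structure WVar (V T : ℕ) where
  isX : Bool
  v : Fin V
  t : Fin T

/-- The value of the selected variable. -/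
def WVar.val {V T : ℕ} (x y : Fin V → Fin T → ℝ) (u : WVar V T) : ℝ :=
  if u.isX then x u.v u.t else y u.v u.t

/-- The lower bound of the selected variable. -/
def WVar.lb {V T : ℕ} (Lx Ly : Fin V → Fin T → ℝ) (u : WVar V T) : ℝ :=
  if u.isX then Lx u.v u.t else Ly u.v u.t

/-- The upper bound of the selected variable. -/
def WVar.ub {V T : ℕ} (Ux Uy : Fin V → Fin T → ℝ) (u : WVar V T) : ℝ :=
  if u.isX then Ux u.v u.t else Uy u.v u.t

/-- A generalized complementarity constraint `(V₁ - B₁)(V₂ - B₂) = 0`. -/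
structure CompCon (V T : ℕ) where
  V1 : WVar V T
  V2 : WVar V T
  B1 : ℝ
  B2 : ℝ

/-- Validity of a complementarity tuple: the time index of `V₁` is at most that of `V₂`,
and each constant is zero or the lower or upper bound of the corresponding variable. -/
def ValidCompCon {V T : ℕ} (Lx Ux Ly Uy : Fin V → Fin T → ℝ) (c : CompCon V T) : Prop :=
  c.V1.t ≤ c.V2.t ∧
  (c.B1 = 0 ∨ c.B1 = c.V1.lb Lx Ly ∨ c.B1 = c.V1.ub Ux Uy) ∧
  (c.B2 = 0 ∨ c.B2 = c.V2.lb Lx Ly ∨ c.B2 = c.V2.ub Ux Uy)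

/-- The stock level at the end of period `t - 1` (the initial stock `s0` when `t = 1`). -/
def prevStock {T : ℕ} (s0 : ℝ) (s : Fin T → ℝ) (t : Fin T) : ℝ :=
  if _ : (t : ℕ) = 0 then s0 else s ⟨(t : ℕ) - 1, lt_of_le_of_lt (Nat.sub_le _ _) t.isLt⟩

/-- The feasible region `Q` of the warehouse problem. -/
def Qset {V T : ℕ} (s0 : ℝ) (Ls Us : Fin T → ℝ) (Lx Ux Ly Uy : Fin V → Fin T → ℝ)
    (C : Finset (CompCon V T)) : Set (WPoint V T) :=
  { p | (∀ t, p.s t = prevStock s0 p.s t - ∑ v, p.y v t + ∑ v, p.x v t) ∧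
        (∀ t, Ls t ≤ p.s t ∧ p.s t ≤ Us t) ∧
        (∀ t, ∑ v, p.y v t ≤ prevStock s0 p.s t) ∧
        (∀ c ∈ C, (c.V1.val p.x p.y - c.B1) * (c.V2.val p.x p.y - c.B2) = 0) ∧
        (∀ v t, Ly v t * p.z v t ≤ p.y v t ∧ p.y v t ≤ Uy v t * p.z v t) ∧
        (∀ v t, Lx v t * p.w v t ≤ p.x v t ∧ p.x v t ≤ Ux v t * p.w v t) ∧
        (∀ v t, p.w v t = 0 ∨ p.w v t = 1) ∧
        (∀ v t, p.z v t = 0 ∨ p.z v t = 1) }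

/-- The set `S` of candidate extreme stock levels. -/
def Sset {V T : ℕ} (s0 : ℝ) (Ls Us : Fin T → ℝ) (Lx Ux Ly Uy : Fin V → Fin T → ℝ) :
    Set ℝ :=
  { r | ∃ (K : ℝ) (lam : Fin 4 → Fin V → Fin T → ℝ),
      (K = 0 ∨ K = s0 ∨ (∃ t, K = Ls t) ∨ (∃ t, K = Us t)) ∧
      (∀ j v t, lam j v t = -1 ∨ lam j v t = 0 ∨ lam j v t = 1) ∧
      r = K - ∑ t, ∑ v,
        (lam 0 v t * Ly v t + lam 1 v t * Uy v t + lam 2 v t * Lx v t + lam 3 v t * Ux v t) }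


/-- Perturbation direction: `+1` at `(v1, t)`, `-1` at `(v2, t)`, `0` elsewhere
(when `v1 ≠ v2`). -/
def pertDir {V T : ℕ} (v1 v2 : Fin V) (t : Fin T) : Fin V → Fin T → ℝ :=
  fun v' t' => if t' = t then ((if v' = v1 then 1 else 0) - (if v' = v2 then 1 else 0)) else 0

lemma sum_pertDir {V T : ℕ} (v1 v2 : Fin V) (t t' : Fin T) :
    ∑ v, pertDir v1 v2 t v t' = 0 := by
  by_cases h : t' = t <;> simp [pertDir, h, Finset.sum_sub_distrib, Finset.sum_ite_eq']

/-- At an extreme point of `P = conv(Q)`, if total sales at time `t` equal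
the previous stock level, then at most one vendor's sales quantity `y*_{v,t}` fails to be at
zero or at its lower or upper bound. -/
theorem extremePoint_at_most_one_fractional_sale_of_sales_eq {V T : ℕ} (s0 : ℝ)
    (Ls Us : Fin T → ℝ) (Lx Ux Ly Uy : Fin V → Fin T → ℝ)
    (C : Finset (CompCon V T))
    (hLs : ∀ t, 0 ≤ Ls t) (hsLU : ∀ t, Ls t ≤ Us t)
    (hLx : ∀ v t, 0 ≤ Lx v t) (hxLU : ∀ v t, Lx v t ≤ Ux v t)
    (hLy : ∀ v t, 0 ≤ Ly v t) (hyLU : ∀ v t, Ly v t ≤ Uy v t)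
    (hC : ∀ c ∈ C, ValidCompCon Lx Ux Ly Uy c)
    (p : WPoint V T)
    (hp : p ∈ Set.extremePoints ℝ (convexHull ℝ (Qset s0 Ls Us Lx Ux Ly Uy C)))
    (t : Fin T)
    (heq : ∑ v, WPoint.y p v t = prevStock s0 (WPoint.s p) t) :
    ({ v : Fin V | WPoint.y p v t ∉ ({0, Ly v t, Uy v t} : Set ℝ) }).Subsingleton := by

  classical
  intro v1 hv1 v2 hv2
  by_contra hne
  have hpQ : p ∈ Qset s0 Ls Us Lx Ux Ly Uy C :=
    extremePoints_convexHull_subset hp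
  obtain ⟨hbal, hsb, hsum, hcomp, hyz, hxw, hwb, hzb⟩ := hpQ
  -- fractional vendors have strictly interior sales
  have hstrict : ∀ v : Fin V, WPoint.y p v t ∉ ({0, Ly v t, Uy v t} : Set ℝ) →
      Ly v t < WPoint.y p v t ∧ WPoint.y p v t < Uy v t := by
    intro v hv
    simp only [Set.mem_insert_iff, Set.mem_singleton_iff, not_or] at hv
    obtain ⟨h0, hL, hU⟩ := hv
    rcases hzb v t with hz0 | hz1
    · exfalso
      have h1 := (hyz v t).1
      have h2 := (hyz v t).2
      rw [hz0] at h1 h2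
      simp at h1 h2
      exact h0 (le_antisymm h2 h1)
    · have h1 := (hyz v t).1
      have h2 := (hyz v t).2
      rw [hz1, mul_one] at h1 h2
      exact ⟨lt_of_le_of_ne h1 (Ne.symm hL), lt_of_le_of_ne h2 hU⟩
  obtain ⟨hL1, hU1⟩ := hstrict v1 hv1
  obtain ⟨hL2, hU2⟩ := hstrict v2 hv2
  simp only [Set.mem_insert_iff, Set.mem_singleton_iff, not_or, Set.mem_setOf_eq] at hv1 hv2
  obtain ⟨hv10, hv1L, hv1U⟩ := hv1
  obtain ⟨hv20, hv2L, hv2U⟩ := hv2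
  have hne' : ¬v2 = v1 := fun h => hne h.symm
  set ε : ℝ := min (min (WPoint.y p v1 t - Ly v1 t) (Uy v1 t - WPoint.y p v1 t))
      (min (WPoint.y p v2 t - Ly v2 t) (Uy v2 t - WPoint.y p v2 t)) with hεdef
  have hε : 0 < ε := by
    rw [hεdef]
    exact lt_min (lt_min (by linarith) (by linarith)) (lt_min (by linarith) (by linarith))
  set d : Fin V → Fin T → ℝ := pertDir v1 v2 t with hd
  have hd1 : d v1 t = 1 := by simp [hd, pertDir, hne]
  have hd2 : d v2 t = -1 := by simp [hd, pertDir, Ne.symm hne]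
  have hdabs : ∀ v' t', d v' t' = 1 ∨ d v' t' = -1 ∨ d v' t' = 0 := by
    intro v' t'
    by_cases h1 : t' = t <;> by_cases h2 : v' = v1 <;> by_cases h3 : v' = v2 <;>
      simp [hd, pertDir, h1, h2, h3, hne, hne']
  -- the perturbed point
  have key : ∀ e : ℝ, -ε ≤ e → e ≤ ε →
      ((p.1, (fun v' t' => p.2.1 v' t' + e * d v' t'), p.2.2.1, p.2.2.2.1, p.2.2.2.2) :
        WPoint V T) ∈ Qset s0 Ls Us Lx Ux Ly Uy C := by
    intro e he1 he2
    have hsum0 : ∀ t' : Fin T, ∑ v, (p.2.1 v t' + e * d v t') = ∑ v, p.2.1 v t' := by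
      intro t'
      rw [Finset.sum_add_distrib, ← Finset.mul_sum, hd, sum_pertDir, mul_zero, add_zero]
    -- unchanged values for non-perturbed variables
    have hval : ∀ u : WVar V T, ¬(u.isX = false ∧ u.t = t ∧ (u.v = v1 ∨ u.v = v2)) →
        WVar.val p.1 (fun v' t' => p.2.1 v' t' + e * d v' t') u
          = WVar.val p.1 p.2.1 u := by
      intro u hu
      unfold WVar.val
      rcases Bool.eq_false_or_eq_true u.isX with hx | hx
      · simp [hx]
      · simp only [hx]
        push_neg at hu
        have huu := hu hx
        have hdz : d u.v u.t = 0 := by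
          by_cases ht' : u.t = t
          · have h2 := huu ht'
            simp [hd, pertDir, ht', h2.1, h2.2]
          · simp [hd, pertDir, ht']
        simp [hdz]
    -- perturbed variables are away from all admissible constants
    have hne0 : ∀ u : WVar V T, u.isX = false → u.t = t → (u.v = v1 ∨ u.v = v2) →
        ∀ B : ℝ, (B = 0 ∨ B = u.lb Lx Ly ∨ B = u.ub Ux Uy) →
        WVar.val p.1 p.2.1 u - B ≠ 0 := by
      intro u hx ht hv B hB
      have hlb : u.lb Lx Ly = Ly u.v u.t := by simp [WVar.lb, hx]
      have hub : u.ub Ux Uy = Uy u.v u.t := by simp [WVar.ub, hx]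
      have hval' : WVar.val p.1 p.2.1 u = WPoint.y p u.v u.t := by
        simp [WVar.val, hx, WPoint.y]
      rw [hval', sub_ne_zero]
      rcases hv with hv | hv <;> subst hv <;> subst ht <;>
        rcases hB with hB | hB | hB <;> rw [hB] <;>
          first
            | exact hv10
            | exact hv20
            | (rw [hlb]; exact hv1L)
            | (rw [hlb]; exact hv2L)
            | (rw [hub]; exact hv1U)
            | (rw [hub]; exact hv2U)
    refine ⟨?_, ?_, ?_, ?_, ?_, ?_, ?_, ?_⟩
    · intro t'
      show WPoint.s p t' = prevStock s0 (WPoint.s p) t' - ∑ v, (p.2.1 v t' + e * d v t')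
        + ∑ v, p.1 v t'
      rw [hsum0]
      exact hbal t'
    · exact hsb
    · intro t'
      show ∑ v, (p.2.1 v t' + e * d v t') ≤ prevStock s0 (WPoint.s p) t'
      rw [hsum0]
      exact hsum t'
    · intro c hc
      obtain ⟨-, hB1, hB2⟩ := hC c hc
      have h0 := hcomp c hc
      by_cases hP1 : c.V1.isX = false ∧ c.V1.t = t ∧ (c.V1.v = v1 ∨ c.V1.v = v2)
      · by_cases hP2 : c.V2.isX = false ∧ c.V2.t = t ∧ (c.V2.v = v1 ∨ c.V2.v = v2)
        · exfalso
          rcases mul_eq_zero.1 h0 with h | h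
          · exact hne0 c.V1 hP1.1 hP1.2.1 hP1.2.2 c.B1 hB1 h
          · exact hne0 c.V2 hP2.1 hP2.2.1 hP2.2.2 c.B2 hB2 h
        · have h2 : WVar.val p.1 p.2.1 c.V2 - c.B2 = 0 := by
            rcases mul_eq_zero.1 h0 with h | h
            · exact absurd h (hne0 c.V1 hP1.1 hP1.2.1 hP1.2.2 c.B1 hB1)
            · exact h
          show (WVar.val p.1 (fun v' t' => p.2.1 v' t' + e * d v' t') c.V1 - c.B1)
            * (WVar.val p.1 (fun v' t' => p.2.1 v' t' + e * d v' t') c.V2 - c.B2) = 0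
          rw [hval c.V2 hP2, h2, mul_zero]
      · by_cases hP2 : c.V2.isX = false ∧ c.V2.t = t ∧ (c.V2.v = v1 ∨ c.V2.v = v2)
        · have h1 : WVar.val p.1 p.2.1 c.V1 - c.B1 = 0 := by
            rcases mul_eq_zero.1 h0 with h | h
            · exact h
            · exact absurd h (hne0 c.V2 hP2.1 hP2.2.1 hP2.2.2 c.B2 hB2)
          show (WVar.val p.1 (fun v' t' => p.2.1 v' t' + e * d v' t') c.V1 - c.B1)
            * (WVar.val p.1 (fun v' t' => p.2.1 v' t' + e * d v' t') c.V2 - c.B2) = 0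
          rw [hval c.V1 hP1, h1, zero_mul]
        · show (WVar.val p.1 (fun v' t' => p.2.1 v' t' + e * d v' t') c.V1 - c.B1)
            * (WVar.val p.1 (fun v' t' => p.2.1 v' t' + e * d v' t') c.V2 - c.B2) = 0
          rw [hval c.V1 hP1, hval c.V2 hP2]
          exact h0
    · intro v' t'
      show Ly v' t' * WPoint.z p v' t' ≤ p.2.1 v' t' + e * d v' t'
        ∧ p.2.1 v' t' + e * d v' t' ≤ Uy v' t' * WPoint.z p v' t'
      rcases hdabs v' t' with hdd | hdd | hdd
      · -- d = 1 means (v', t') = (v1, t)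
        have hvt : v' = v1 ∧ t' = t := by
          by_cases h1 : t' = t
          · by_cases h2 : v' = v1
            · exact ⟨h2, h1⟩
            · exfalso
              by_cases h3 : v' = v2 <;> simp [hd, pertDir, h1, h2, h3, hne, hne'] at hdd <;> norm_num at hdd
          · exfalso; simp [hd, pertDir, h1] at hdd
        obtain ⟨rfl, rfl⟩ := hvt
        have hz1 : WPoint.z p v' t' = 1 := by
          rcases hzb v' t' with hz0 | hz1
          · exfalso
            have h1 := (hyz v' t').1
            have h2 := (hyz v' t').2
            rw [hz0] at h1 h2
            simp at h1 h2
            exact hv10 (le_antisymm h2 h1)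
          · exact hz1
        rw [hz1]
        simp only [mul_one, hdd]
        constructor
        · have : ε ≤ WPoint.y p v' t' - Ly v' t' :=
            le_trans (min_le_left _ _) (min_le_left _ _)
          have hy : WPoint.y p v' t' = p.2.1 v' t' := rfl
          linarith
        · have : ε ≤ Uy v' t' - WPoint.y p v' t' :=
            le_trans (min_le_left _ _) (min_le_right _ _)
          have hy : WPoint.y p v' t' = p.2.1 v' t' := rfl
          linarith
      · -- d = -1 means (v', t') = (v2, t)
        have hvt : v' = v2 ∧ t' = t := by
          by_cases h1 : t' = t
          · by_cases h3 : v' = v2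
            · exact ⟨h3, h1⟩
            · exfalso
              by_cases h2 : v' = v1 <;> simp [hd, pertDir, h1, h2, h3, hne, hne'] at hdd <;> norm_num at hdd
          · exfalso; simp [hd, pertDir, h1] at hdd
        obtain ⟨rfl, rfl⟩ := hvt
        have hz1 : WPoint.z p v' t' = 1 := by
          rcases hzb v' t' with hz0 | hz1
          · exfalso
            have h1 := (hyz v' t').1
            have h2 := (hyz v' t').2
            rw [hz0] at h1 h2
            simp at h1 h2
            exact hv20 (le_antisymm h2 h1)
          · exact hz1
        rw [hz1]
        simp only [mul_one, hdd]
        constructor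
        · have : ε ≤ WPoint.y p v' t' - Ly v' t' :=
            le_trans (min_le_right _ _) (min_le_left _ _)
          have hy : WPoint.y p v' t' = p.2.1 v' t' := rfl
          linarith
        · have : ε ≤ Uy v' t' - WPoint.y p v' t' :=
            le_trans (min_le_right _ _) (min_le_right _ _)
          have hy : WPoint.y p v' t' = p.2.1 v' t' := rfl
          linarith
      · rw [hdd, mul_zero, add_zero]
        exact hyz v' t'
    · exact hxw
    · exact hwb
    · exact hzb
  -- two distinct feasible points of which p is the midpoint
  set q1 : WPoint V T :=
    (p.1, (fun v' t' => p.2.1 v' t' + ε * d v' t'), p.2.2.1, p.2.2.2.1, p.2.2.2.2) with hq1def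
  set q2 : WPoint V T :=
    (p.1, (fun v' t' => p.2.1 v' t' + (-ε) * d v' t'), p.2.2.1, p.2.2.2.1, p.2.2.2.2) with hq2def
  have hq1 : q1 ∈ convexHull ℝ (Qset s0 Ls Us Lx Ux Ly Uy C) :=
    subset_convexHull ℝ _ (key ε (by linarith) le_rfl)
  have hq2 : q2 ∈ convexHull ℝ (Qset s0 Ls Us Lx Ux Ly Uy C) :=
    subset_convexHull ℝ _ (key (-ε) le_rfl (by linarith))
  have hmid : (1/2 : ℝ) • q1 + (1/2 : ℝ) • q2 = p := by
    rw [hq1def, hq2def]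
    refine Prod.ext_iff.mpr ⟨?_, Prod.ext_iff.mpr ⟨?_, Prod.ext_iff.mpr ⟨?_,
      Prod.ext_iff.mpr ⟨?_, ?_⟩⟩⟩⟩
    · funext v' t'
      simp only [Prod.fst_add, Prod.smul_fst, Pi.add_apply, Pi.smul_apply, smul_eq_mul]
      ring
    · funext v' t'
      simp only [Prod.snd_add, Prod.fst_add, Prod.smul_snd, Prod.smul_fst,
        Pi.add_apply, Pi.smul_apply, smul_eq_mul]
      ring
    · funext v' t'
      simp only [Prod.snd_add, Prod.fst_add, Prod.smul_snd, Prod.smul_fst,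
        Pi.add_apply, Pi.smul_apply, smul_eq_mul]
      ring
    · funext v' t'
      simp only [Prod.snd_add, Prod.fst_add, Prod.smul_snd, Prod.smul_fst,
        Pi.add_apply, Pi.smul_apply, smul_eq_mul]
      ring
    · funext t'
      simp only [Prod.snd_add, Prod.smul_snd, Pi.add_apply, Pi.smul_apply, smul_eq_mul]
      ring
  have hseg : p ∈ openSegment ℝ q1 q2 :=
    ⟨1/2, 1/2, by norm_num, by norm_num, by norm_num, hmid⟩
  have hqp := hp.2 hq1 hq2 hseg
  have hcontra : p.2.1 v1 t + ε * d v1 t = p.2.1 v1 t := by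
    have h := congrFun (congrFun (congrArg (fun r : WPoint V T => r.2.1) hqp) v1) t
    simpa [hq1def] using h
  rw [hd1, mul_one] at hcontra
  linarith
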